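/- Let F_n(x) = 2^{1-n} · #{ j : x_j^(n) ≤ x } denote the distribution function of the n-th generation of the Calkin–Wilf tree. Then for every n ≥ 1 and every x ≥ 0 one has |F(x) − F_n(x)| ≤ 2^{−n}; in particular F_n converges to F uniformly on [0,∞). -/

import Mathlib

open scoped Classical

/-- Cumulative sums `a₀ + a₁ + ⋯ + a_k` of the regular continued fraction
expansion of `x` (`none` once the expansion has terminated). -/
noncomputable def cfSum (x : ℝ) : ℕ → Option ℝ
  | 0 => some (⌊x⌋ : ℝ)
  | (k + 1) => (cfSum x k).bind fun s =>
      ((GenContFract.of x).partDens.get? k).map fun b => s + b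

/-- The Minkowski question mark function in its version on `[0, ∞)`:
`F([a₀; a₁, a₂, …]) = 1 - 2^{-a₀} + 2^{-(a₀+a₁)} - 2^{-(a₀+a₁+a₂)} + ⋯`. -/
noncomputable def minkQ (x : ℝ) : ℝ :=
  1 + ∑' k : ℕ, (cfSum x k).elim 0 fun s => (-1 : ℝ) ^ (k + 1) * (2 : ℝ) ^ (-s)

/-- Generations of the Calkin–Wilf tree: `cwGen 0 = [1]` is the first
generation (`cwGen (n-1)` is the `n`-th generation `T^{(n)}`, having `2^{n-1}`
elements), and each vertex `a/b` has children `a/(a+b) = q/(q+1)` and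
`(a+b)/b = q+1`. -/
def cwGen : ℕ → List ℚ
  | 0 => [1]
  | (n + 1) => (cwGen n).flatMap fun q => [q / (q + 1), q + 1]

/-- `F_n(x) = 2^{1-n} · #{ j : x_j^{(n)} ≤ x }`, the distribution function of
the `n`-th generation of the Calkin–Wilf tree. -/
noncomputable def cwDist (n : ℕ) (x : ℝ) : ℝ :=
  ((cwGen (n - 1)).countP fun q => decide ((q : ℝ) ≤ x)) / 2 ^ (n - 1)

section CF

open GenContFract

/-- terms of the series defining `minkQ` -/
noncomputable def cfTerm (x : ℝ) (k : ℕ) : ℝ :=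
  (cfSum x k).elim 0 fun s => (-1 : ℝ) ^ (k + 1) * (2 : ℝ) ^ (-s)

/-- absolute values of the terms -/
noncomputable def cfAbs (x : ℝ) (k : ℕ) : ℝ :=
  (cfSum x k).elim 0 fun s => (2 : ℝ) ^ (-s)

lemma minkQ_eq (x : ℝ) : minkQ x = 1 + ∑' k : ℕ, cfTerm x k := rfl

lemma pd_get? (x : ℝ) (k : ℕ) :
    (GenContFract.of x).partDens.get? k = ((GenContFract.of x).s.get? k).map Pair.b :=
  Stream'.Seq.map_get? _ _ _

lemma of_s_get?_add_one (x : ℝ) (k : ℕ) :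
    (GenContFract.of (x + 1)).s.get? k = (GenContFract.of x).s.get? k := by
  have hf : Int.fract (x + 1) = Int.fract x := Int.fract_add_one x
  cases k with
  | zero =>
    rcases eq_or_ne (Int.fract x) 0 with h | h
    · obtain ⟨a, rfl⟩ : ∃ a : ℤ, x = (a : ℝ) := ⟨⌊x⌋, by
        have := Int.fract_add_floor x
        rw [h, zero_add] at this; exact this.symm⟩
      have hx1 : (a : ℝ) + 1 = ((a + 1 : ℤ) : ℝ) := by push_cast; ring
      rw [of_s_head_aux, of_s_head_aux, hx1,
        IntFractPair.stream_succ_of_int, IntFractPair.stream_succ_of_int]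
    · have h' : Int.fract (x + 1) ≠ 0 := by rwa [hf]
      rw [of_s_head_aux, of_s_head_aux, IntFractPair.stream_succ h' 0,
        IntFractPair.stream_succ h 0, hf]
  | succ k =>
    rw [of_s_succ, of_s_succ, hf]

lemma cfSum_add_one (x : ℝ) : ∀ k, cfSum (x + 1) k = (cfSum x k).map (· + 1)
  | 0 => by
    simp only [cfSum, Option.map_some]
    congr 1
    rw [Int.floor_add_one]
    push_cast; ring
  | (k + 1) => by
    rw [cfSum, cfSum, cfSum_add_one x k, pd_get?, pd_get?, of_s_get?_add_one]
    cases h1 : cfSum x k <;> cases h2 : (GenContFract.of x).s.get? k <;>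
      simp [Option.map, add_right_comm]

lemma cfSum_inv {v : ℝ} (h0 : 0 < v) (h1 : v < 1) : ∀ k, cfSum v (k + 1) = cfSum v⁻¹ k
  | 0 => by
    have hfr : Int.fract v = v := Int.fract_eq_self.mpr ⟨h0.le, h1⟩
    have hfl : ⌊v⌋ = 0 := Int.floor_eq_zero_iff.mpr ⟨h0.le, h1⟩
    have hhead : (GenContFract.of v).s.get? 0 = some ⟨1, (⌊v⁻¹⌋ : ℝ)⟩ := by
      have := of_s_head (v := v) (by rw [hfr]; exact h0.ne')
      rwa [hfr] at this
    rw [cfSum, cfSum, pd_get?, hhead]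
    simp [cfSum, hfl]
  | (k + 1) => by
    have hfr : Int.fract v = v := Int.fract_eq_self.mpr ⟨h0.le, h1⟩
    have hs : (GenContFract.of v).s.get? (k + 1) = (GenContFract.of v⁻¹).s.get? k := by
      rw [of_s_succ, hfr]
    rw [cfSum, cfSum_inv h0 h1 k, pd_get?, hs, ← pd_get?]
    rfl

lemma cfTerm_eq (x : ℝ) (k : ℕ) : cfTerm x k = (-1 : ℝ) ^ (k + 1) * cfAbs x k := by
  cases h : cfSum x k <;> simp [cfTerm, cfAbs, h]

lemma cfAbs_nonneg (x : ℝ) (k : ℕ) : 0 ≤ cfAbs x k := by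
  cases h : cfSum x k with
  | none => simp [cfAbs, h]
  | some s => simpa [cfAbs, h] using (Real.rpow_pos_of_pos two_pos (-s)).le

lemma cfAbs_zero_le_one {x : ℝ} (hx : 0 ≤ x) : cfAbs x 0 ≤ 1 := by
  have h : cfSum x 0 = some ((⌊x⌋ : ℝ)) := rfl
  have h0 : (0 : ℝ) ≤ (⌊x⌋ : ℝ) := by exact_mod_cast Int.floor_nonneg.mpr hx
  simpa [cfAbs, h] using Real.rpow_le_one_of_one_le_of_nonpos one_le_two (by linarith)

lemma cfAbs_succ_le (x : ℝ) (k : ℕ) : cfAbs x (k + 1) ≤ (1 / 2) * cfAbs x k := by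
  cases h : cfSum x (k + 1) with
  | none =>
    have h0 : cfAbs x (k + 1) = 0 := by simp [cfAbs, h]
    have := cfAbs_nonneg x k
    rw [h0]; linarith
  | some s' =>
    have h2' := h
    rw [cfSum] at h2'
    rcases Option.bind_eq_some_iff.mp h2' with ⟨s, hs, hmap⟩
    rcases Option.map_eq_some_iff.mp hmap with ⟨b, hb, hsb⟩
    have hb1 : (1 : ℝ) ≤ b := of_one_le_get?_partDen hb
    have hval : cfAbs x (k + 1) = (2 : ℝ) ^ (-s) * (2 : ℝ) ^ (-b) := by
      have hv : cfAbs x (k + 1) = (2 : ℝ) ^ (-(s + b)) := by simp [cfAbs, h, ← hsb]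
      rw [hv, neg_add, Real.rpow_add two_pos]
    rw [hval]
    have h2 : (2 : ℝ) ^ (-b) ≤ (2 : ℝ) ^ (-(1 : ℝ)) :=
      Real.rpow_le_rpow_left_iff one_lt_two |>.mpr (by linarith)
    have h3 : (2 : ℝ) ^ (-(1 : ℝ)) = 1 / 2 := by
      rw [Real.rpow_neg_one]; norm_num
    have h4 : cfAbs x k = (2 : ℝ) ^ (-s) := by simp [cfAbs, hs]
    have h5 : (0 : ℝ) < (2 : ℝ) ^ (-s) := Real.rpow_pos_of_pos two_pos _
    rw [h4]
    calc (2 : ℝ) ^ (-s) * (2 : ℝ) ^ (-b) ≤ (2 : ℝ) ^ (-s) * (1 / 2) := by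
          rw [← h3]; exact mul_le_mul_of_nonneg_left h2 h5.le
      _ = 1 / 2 * (2 : ℝ) ^ (-s) := by ring

lemma cfAbs_succ_le' (x : ℝ) (k : ℕ) : cfAbs x (k + 1) ≤ cfAbs x k := by
  have h1 := cfAbs_succ_le x k
  have h2 := cfAbs_nonneg x k
  linarith

lemma cfAbs_le_geom {x : ℝ} (hx : 0 ≤ x) : ∀ k, cfAbs x k ≤ (1 / 2 : ℝ) ^ k
  | 0 => by simpa using cfAbs_zero_le_one hx
  | (k + 1) => by
    have h1 := cfAbs_succ_le x k
    have h2 := cfAbs_le_geom hx k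
    calc cfAbs x (k + 1) ≤ 1 / 2 * cfAbs x k := h1
      _ ≤ 1 / 2 * (1 / 2 : ℝ) ^ k := by linarith
      _ = (1 / 2 : ℝ) ^ (k + 1) := by ring

lemma abs_cfTerm (x : ℝ) (k : ℕ) : |cfTerm x k| = cfAbs x k := by
  rw [cfTerm_eq, abs_mul, abs_pow, abs_neg, abs_one, one_pow, one_mul,
    abs_of_nonneg (cfAbs_nonneg x k)]

lemma summable_cfTerm {x : ℝ} (hx : 0 ≤ x) : Summable (cfTerm x) := by
  apply Summable.of_norm_bounded (g := fun k => (1 / 2 : ℝ) ^ k)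
    (summable_geometric_of_lt_one (by norm_num) (by norm_num))
  intro k
  rw [Real.norm_eq_abs, abs_cfTerm]
  exact cfAbs_le_geom hx k

lemma cfTerm_two_mul (x : ℝ) (k : ℕ) : cfTerm x (2 * k) = -cfAbs x (2 * k) := by
  rw [cfTerm_eq]
  have : (-1 : ℝ) ^ (2 * k + 1) = -1 := Odd.neg_one_pow ⟨k, by ring⟩
  rw [this]; ring

lemma cfTerm_two_mul_add_one (x : ℝ) (k : ℕ) :
    cfTerm x (2 * k + 1) = cfAbs x (2 * k + 1) := by
  rw [cfTerm_eq]
  have : (-1 : ℝ) ^ (2 * k + 1 + 1) = 1 := Even.neg_one_pow ⟨k + 1, by ring⟩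
  rw [this]; ring

lemma tsum_cfTerm_nonpos {x : ℝ} (hx : 0 ≤ x) : ∑' k, cfTerm x k ≤ 0 := by
  have hsum := summable_cfTerm hx
  have he : Summable fun k => cfTerm x (2 * k) :=
    hsum.comp_injective (fun a b h => by omega)
  have ho : Summable fun k => cfTerm x (2 * k + 1) :=
    hsum.comp_injective (fun a b h => by omega)
  rw [← tsum_even_add_odd he ho, ← Summable.tsum_add he ho]
  apply tsum_nonpos
  intro k
  rw [cfTerm_two_mul, cfTerm_two_mul_add_one]
  have := cfAbs_succ_le' x (2 * k)
  linarith

lemma neg_one_le_tsum_cfTerm {x : ℝ} (hx : 0 ≤ x) : -1 ≤ ∑' k, cfTerm x k := by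
  have hsum := summable_cfTerm hx
  rw [Summable.tsum_eq_zero_add hsum]
  have h0 : -1 ≤ cfTerm x 0 := by
    have : cfTerm x 0 = -cfAbs x 0 := by
      have : (2 : ℕ) * 0 = 0 := rfl
      simpa using cfTerm_two_mul x 0
    rw [this]
    have := cfAbs_zero_le_one hx
    linarith
  have htail : 0 ≤ ∑' k, cfTerm x (k + 1) := by
    have hsum' : Summable fun k => cfTerm x (k + 1) :=
      (summable_nat_add_iff 1).mpr hsum
    have he : Summable fun k => cfTerm x (2 * k + 1) :=
      hsum.comp_injective (fun a b h => by omega)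
    have ho : Summable fun k => cfTerm x (2 * k + 1 + 1) :=
      hsum.comp_injective (fun a b h => by omega)
    have key : ∑' k, cfTerm x (k + 1) =
        ∑' k, (cfTerm x (2 * k + 1) + cfTerm x (2 * k + 1 + 1)) := by
      rw [Summable.tsum_add he ho, ← tsum_even_add_odd (f := fun k => cfTerm x (k + 1)) he ho]
    rw [key]
    apply tsum_nonneg
    intro k
    rw [cfTerm_two_mul_add_one]
    have h1 : cfTerm x (2 * k + 1 + 1) = -cfAbs x (2 * k + 1 + 1) := by
      have : 2 * k + 1 + 1 = 2 * (k + 1) := by ring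
      rw [this, cfTerm_two_mul]
    rw [h1]
    have := cfAbs_succ_le' x (2 * k + 1)
    linarith
  linarith

lemma minkQ_nonneg {x : ℝ} (hx : 0 ≤ x) : 0 ≤ minkQ x := by
  have := neg_one_le_tsum_cfTerm hx
  rw [minkQ_eq]; linarith

lemma minkQ_le_one {x : ℝ} (hx : 0 ≤ x) : minkQ x ≤ 1 := by
  have := tsum_cfTerm_nonpos hx
  rw [minkQ_eq]; linarith

lemma cfSum_zero_succ : ∀ k, cfSum (0 : ℝ) (k + 1) = none := by
  have hs : ∀ k, (GenContFract.of (0 : ℝ)).s.get? k = none := by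
    intro k
    have := of_s_of_int ℝ 0
    rw [Int.cast_zero] at this
    rw [this, Stream'.Seq.get?_nil]
  intro k
  induction k with
  | zero => rw [cfSum, pd_get?, hs]; simp [cfSum]
  | succ k ih => rw [cfSum, ih]; rfl

lemma minkQ_zero : minkQ 0 = 0 := by
  have h0 : cfTerm 0 0 = -1 := by
    have h : cfSum (0 : ℝ) 0 = some ((⌊(0 : ℝ)⌋ : ℝ)) := rfl
    simp [cfTerm, h]
  have hsum : ∑' k, cfTerm 0 k = -1 := by
    rw [tsum_eq_single 0]
    · exact h0
    · intro k hk
      obtain ⟨k, rfl⟩ := Nat.exists_eq_succ_of_ne_zero hk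
      simp [cfTerm, cfSum_zero_succ k]
  rw [minkQ_eq, hsum]; ring

lemma cfTerm_add_one (x : ℝ) (k : ℕ) : cfTerm (x + 1) k = 1 / 2 * cfTerm x k := by
  rw [cfTerm, cfTerm, cfSum_add_one]
  cases h : cfSum x k with
  | none => simp
  | some s =>
    simp only [Option.map_some, Option.elim]
    rw [neg_add, Real.rpow_add two_pos, Real.rpow_neg_one]
    ring

lemma minkQ_add_one (x : ℝ) : minkQ (x + 1) = (1 + minkQ x) / 2 := by
  have h : ∑' k, cfTerm (x + 1) k = 1 / 2 * ∑' k, cfTerm x k := by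
    rw [← tsum_mul_left]
    exact tsum_congr fun k => cfTerm_add_one x k
  rw [minkQ_eq, minkQ_eq, h]; ring

lemma minkQ_inv {v : ℝ} (h0 : 0 < v) (h1 : v < 1) : minkQ v = 1 - minkQ v⁻¹ := by
  have hfl : ⌊v⌋ = 0 := Int.floor_eq_zero_iff.mpr ⟨h0.le, h1⟩
  have ht0 : cfTerm v 0 = -1 := by
    have h : cfSum v 0 = some ((⌊v⌋ : ℝ)) := rfl
    simp [cfTerm, h, hfl]
  have hterm : ∀ k, cfTerm v (k + 1) = -cfTerm v⁻¹ k := by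
    intro k
    rw [cfTerm, cfTerm, cfSum_inv h0 h1]
    cases h : cfSum v⁻¹ k with
    | none => simp
    | some s => simp only [Option.elim]; rw [pow_succ]; ring
  have hsum := summable_cfTerm h0.le
  have h : ∑' k, cfTerm v k = -1 - ∑' k, cfTerm v⁻¹ k := by
    rw [Summable.tsum_eq_zero_add hsum, ht0]
    have : ∑' k, cfTerm v (k + 1) = ∑' k, -cfTerm v⁻¹ k :=
      tsum_congr fun k => hterm k
    rw [this, tsum_neg]; ring
  rw [minkQ_eq, minkQ_eq, h]; ring

lemma minkQ_one : minkQ 1 = 1 / 2 := by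
  have := minkQ_add_one 0
  rw [zero_add, minkQ_zero] at this
  rw [this]; norm_num

lemma minkQ_halve {t : ℝ} (ht : 0 ≤ t) : minkQ (t / (t + 1)) = minkQ t / 2 := by
  rcases eq_or_lt_of_le ht with h | h
  · rw [← h]; norm_num [minkQ_zero]
  have ht1 : (0 : ℝ) < t + 1 := by linarith
  have hx0 : 0 < t / (t + 1) := div_pos h ht1
  have hx1 : t / (t + 1) < 1 := (div_lt_one ht1).mpr (by linarith)
  have hxinv : (t / (t + 1))⁻¹ = t⁻¹ + 1 := by
    rw [inv_div]
    field_simp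
    ring
  have key : minkQ (t / (t + 1)) = 1 - (1 + minkQ t⁻¹) / 2 := by
    rw [minkQ_inv hx0 hx1, hxinv, minkQ_add_one]
  rcases lt_trichotomy t 1 with h1 | h1 | h1
  · have := minkQ_inv h h1
    rw [key]; linarith
  · subst h1
    rw [key, inv_one, minkQ_one]; norm_num
  · have hinv0 : 0 < t⁻¹ := inv_pos.mpr h
    have hinv1 : t⁻¹ < 1 := inv_lt_one_of_one_lt₀ h1
    have := minkQ_inv hinv0 hinv1
    rw [inv_inv] at this
    rw [key]; linarith

lemma minkQ_ge_half {x : ℝ} (hx : 1 ≤ x) : 1 / 2 ≤ minkQ x := by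
  have h : minkQ (x - 1 + 1) = (1 + minkQ (x - 1)) / 2 := minkQ_add_one (x - 1)
  rw [sub_add_cancel] at h
  have := minkQ_nonneg (x := x - 1) (by linarith)
  rw [h]; linarith

lemma minkQ_le_half {x : ℝ} (hx0 : 0 ≤ x) (hx1 : x < 1) : minkQ x ≤ 1 / 2 := by
  rcases eq_or_lt_of_le hx0 with h | h
  · rw [← h, minkQ_zero]; norm_num
  · have hinv : 1 ≤ x⁻¹ := ((one_lt_inv₀ h).2 hx1).le
    have := minkQ_ge_half hinv
    rw [minkQ_inv h hx1]; linarith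

end CF

section CW

lemma cwGen_pos : ∀ m, ∀ q ∈ cwGen m, 0 < q
  | 0 => by
    intro q hq
    simp only [cwGen, List.mem_singleton] at hq
    rw [hq]; norm_num
  | (m + 1) => by
    intro q hq
    rw [cwGen, List.mem_flatMap] at hq
    obtain ⟨p, hp, hq⟩ := hq
    have hp0 := cwGen_pos m p hp
    simp only [List.mem_cons, List.mem_singleton, List.not_mem_nil, or_false] at hq
    rcases hq with rfl | rfl
    · exact div_pos hp0 (by linarith)
    · linarith

lemma flatMap_pair_length (l : List ℚ) :
    (l.flatMap fun q => [q / (q + 1), q + 1]).length = 2 * l.length := by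
  induction l with
  | nil => simp
  | cons a l ih => simp [List.flatMap_cons, ih]; omega

lemma cwGen_length : ∀ m, (cwGen m).length = 2 ^ m
  | 0 => rfl
  | (m + 1) => by
    rw [cwGen, flatMap_pair_length, cwGen_length m]
    ring

lemma count_step_ge {x : ℝ} (hx : 1 ≤ x) :
    ∀ l : List ℚ, (∀ q ∈ l, 0 < q) →
      (l.flatMap fun q => [q / (q + 1), q + 1]).countP (fun q : ℚ => decide ((q : ℝ) ≤ x))
        = l.length + l.countP (fun q : ℚ => decide ((q : ℝ) ≤ x - 1)) := by
  intro l
  induction l with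
  | nil => intro _; simp
  | cons a l ih =>
    intro hpos
    have ha : (0 : ℚ) < a := hpos a List.mem_cons_self
    have haR : (0 : ℝ) < (a : ℝ) := by exact_mod_cast ha
    rw [List.flatMap_cons, List.countP_append, ih (fun q hq => hpos q (List.mem_cons_of_mem a hq))]
    have h1 : (((a / (a + 1) : ℚ) : ℝ)) ≤ x := by
      push_cast
      have : (a : ℝ) / ((a : ℝ) + 1) < 1 := (div_lt_one (by linarith)).mpr (by linarith)
      linarith
    have h2 : (((a + 1 : ℚ) : ℝ) ≤ x) ↔ ((a : ℝ) ≤ x - 1) := by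
      push_cast
      constructor <;> intro <;> linarith
    simp only [List.countP_cons, List.countP_nil, List.length_cons, decide_eq_true_eq]
    rw [if_pos h1]
    by_cases h : (a : ℝ) ≤ x - 1
    · rw [if_pos (h2.mpr h), if_pos h]; omega
    · rw [if_neg (fun hc => h (h2.mp hc)), if_neg h]; omega

lemma count_step_lt {x : ℝ} (hx0 : 0 ≤ x) (hx1 : x < 1) :
    ∀ l : List ℚ, (∀ q ∈ l, 0 < q) →
      (l.flatMap fun q => [q / (q + 1), q + 1]).countP (fun q : ℚ => decide ((q : ℝ) ≤ x))
        = l.countP (fun q : ℚ => decide ((q : ℝ) ≤ x / (1 - x))) := by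
  intro l
  induction l with
  | nil => intro _; simp
  | cons a l ih =>
    intro hpos
    have ha : (0 : ℚ) < a := hpos a List.mem_cons_self
    have haR : (0 : ℝ) < (a : ℝ) := by exact_mod_cast ha
    rw [List.flatMap_cons, List.countP_append, ih (fun q hq => hpos q (List.mem_cons_of_mem a hq))]
    have h2 : ¬ (((a + 1 : ℚ) : ℝ) ≤ x) := by
      push_cast
      linarith
    have h1 : (((a / (a + 1) : ℚ) : ℝ) ≤ x) ↔ ((a : ℝ) ≤ x / (1 - x)) := by
      push_cast
      rw [div_le_iff₀ (by linarith : (0:ℝ) < (a : ℝ) + 1),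
        le_div_iff₀ (by linarith : (0:ℝ) < 1 - x)]
      constructor <;> intro <;> nlinarith
    simp only [List.countP_cons, List.countP_nil, decide_eq_true_eq]
    rw [if_neg h2]
    by_cases h : (a : ℝ) ≤ x / (1 - x)
    · rw [if_pos (h1.mpr h), if_pos h]; omega
    · rw [if_neg (fun hc => h (h1.mp hc)), if_neg h]; omega

lemma key_bound : ∀ m : ℕ, ∀ x : ℝ, 0 ≤ x →
    |minkQ x - ((cwGen m).countP fun q : ℚ => decide ((q : ℝ) ≤ x)) / 2 ^ m| ≤ (1 / 2 : ℝ) ^ (m + 1)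
  | 0 => by
    intro x hx
    have hgen : cwGen 0 = [1] := rfl
    rw [hgen]
    by_cases h : (1 : ℝ) ≤ x
    · have hc : ([ (1:ℚ) ].countP fun q : ℚ => decide ((q : ℝ) ≤ x)) = 1 := by
        simp only [List.countP_cons, List.countP_nil, Rat.cast_one, decide_eq_true_eq]
        rw [if_pos h]
      rw [hc]
      have hb1 := minkQ_ge_half h
      have hb2 := minkQ_le_one hx
      rw [abs_le]
      constructor <;> simp <;> linarith
    · have hx1 : x < 1 := not_le.1 h
      have hc : ([ (1:ℚ) ].countP fun q : ℚ => decide ((q : ℝ) ≤ x)) = 0 := by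
        simp only [List.countP_cons, List.countP_nil, Rat.cast_one, decide_eq_true_eq]
        rw [if_neg h]
      rw [hc]
      have hb1 := minkQ_nonneg hx
      have hb2 := minkQ_le_half hx hx1
      rw [abs_le]
      constructor <;> simp <;> linarith
  | (m + 1) => by
    intro x hx
    by_cases h1 : 1 ≤ x
    · rw [cwGen, count_step_ge h1 (cwGen m) (cwGen_pos m)]
      have ih := key_bound m (x - 1) (by linarith)
      have hF : minkQ x = (1 + minkQ (x - 1)) / 2 := by
        have := minkQ_add_one (x - 1)
        rwa [sub_add_cancel] at this
      set c : ℝ := (((cwGen m).countP fun q : ℚ => decide ((q : ℝ) ≤ x - 1) : ℕ) : ℝ)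
      have hcast : (((cwGen m).length + ((cwGen m).countP fun q : ℚ => decide ((q : ℝ) ≤ x - 1)) : ℕ) : ℝ)
          = 2 ^ m + c := by
        push_cast [cwGen_length m]
        ring
      rw [hcast, hF]
      have heq : (1 + minkQ (x - 1)) / 2 - (2 ^ m + c) / 2 ^ (m + 1)
          = (minkQ (x - 1) - c / 2 ^ m) / 2 := by
        have h2m : (2 : ℝ) ^ (m + 1) = 2 * 2 ^ m := by ring
        rw [h2m]
        field_simp
        ring
      rw [heq, abs_div, abs_two]
      have : ((1:ℝ)/2) ^ (m + 1 + 1) = ((1:ℝ)/2) ^ (m + 1) / 2 := by ring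
      rw [this]
      linarith [ih]
    · have hx1 : x < 1 := not_le.1 h1
      rw [cwGen, count_step_lt hx hx1 (cwGen m) (cwGen_pos m)]
      set t : ℝ := x / (1 - x) with hht
      have ht : 0 ≤ t := div_nonneg hx (by linarith)
      have hxt : t / (t + 1) = x := by
        rw [hht]
        have h1x : (1 : ℝ) - x ≠ 0 := by linarith
        field_simp
        ring
      have hF : minkQ x = minkQ t / 2 := by
        rw [← hxt, minkQ_halve ht]
      have ih := key_bound m t ht
      set c : ℝ := (((cwGen m).countP fun q : ℚ => decide ((q : ℝ) ≤ t) : ℕ) : ℝ)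
      rw [hF]
      have heq : minkQ t / 2 - c / 2 ^ (m + 1) = (minkQ t - c / 2 ^ m) / 2 := by
        have h2m : (2 : ℝ) ^ (m + 1) = 2 * 2 ^ m := by ring
        rw [h2m]
        field_simp
      rw [heq, abs_div, abs_two]
      have : ((1:ℝ)/2) ^ (m + 1 + 1) = ((1:ℝ)/2) ^ (m + 1) / 2 := by ring
      rw [this]
      linarith [ih]

end CW

lemma countP_coe (l : List ℚ) (p : ℝ → Bool) :
    List.countP p (l.flatMap fun a : ℚ => [(a : ℝ)]) = l.countP fun q : ℚ => p (q : ℝ) := by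
  induction l with
  | nil => rfl
  | cons a l ih => simp [List.flatMap_cons, List.countP_cons, List.countP_append, ih]

/-- For every `n ≥ 1` and every `x ≥ 0` one has `|F(x) − F_n(x)| ≤ 2^{−n}`;
in particular `F_n → F` uniformly on `[0, ∞)`. -/
theorem minkQ_sub_cwDist_abs_le (n : ℕ) (hn : 1 ≤ n) (x : ℝ) (hx : 0 ≤ x) :
    |minkQ x - cwDist n x| ≤ 2 ^ (-(n : ℤ)) ∧
    TendstoUniformlyOn (fun n x => cwDist n x) minkQ Filter.atTop (Set.Ici 0) := by
  have hbd : ∀ m : ℕ, ∀ y : ℝ, 0 ≤ y → |minkQ y - cwDist (m + 1) y| ≤ (1 / 2 : ℝ) ^ (m + 1) := by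
    intro m y hy
    have := key_bound m y hy
    have hc : List.countP (fun q : ℝ => decide (q ≤ y)) (bind (cwGen m) fun a => pure ((a : ℝ)))
        = (cwGen m).countP fun q : ℚ => decide ((q : ℝ) ≤ y) := countP_coe _ _
    unfold cwDist
    simp only [Nat.add_sub_cancel]
    rw [show (bind (cwGen m) fun a => pure ((a : ℝ))) = (cwGen m).flatMap fun a : ℚ => [(a : ℝ)] from rfl] at hc
    rw [show (List.countP (fun q : ℝ => decide (q ≤ y)) (bind (cwGen m) fun a => pure ((a : ℝ))))
      = (cwGen m).countP (fun q : ℚ => decide ((q : ℝ) ≤ y)) from hc]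
    exact this
  constructor
  · obtain ⟨m, rfl⟩ : ∃ m, n = m + 1 := ⟨n - 1, (Nat.succ_pred_eq_of_pos hn).symm⟩
    have h := hbd m x hx
    have hpow : ((1 : ℝ) / 2) ^ (m + 1) = 2 ^ (-((m + 1 : ℕ) : ℤ)) := by
      rw [zpow_neg, zpow_natCast]
      rw [one_div, inv_pow]
    rwa [hpow] at h
  · rw [Metric.tendstoUniformlyOn_iff]
    intro ε hε
    have htend : Filter.Tendsto (fun k : ℕ => ((1 : ℝ) / 2) ^ k) Filter.atTop (nhds 0) :=
      tendsto_pow_atTop_nhds_zero_of_lt_one (by norm_num) (by norm_num)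
    have hev : ∀ᶠ k : ℕ in Filter.atTop, ((1 : ℝ) / 2) ^ k < ε :=
      htend.eventually (gt_mem_nhds hε)
    filter_upwards [hev, Filter.eventually_ge_atTop 1] with k hk hk1 y hy
    obtain ⟨m, rfl⟩ : ∃ m, k = m + 1 := ⟨k - 1, (Nat.succ_pred_eq_of_pos hk1).symm⟩
    rw [Real.dist_eq]
    calc |minkQ y - cwDist (m + 1) y| ≤ (1 / 2 : ℝ) ^ (m + 1) := hbd m y hy
      _ < ε := hk
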